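/- Optimality of likelihood-threshold trimming for fixed parameters: let P be an absolutely continuous probability measure on ℝᵖ, let g(x) = max_{j=1,…,k} π_j φ(x; θ_j) and B = {x : g(x) ≥ r} where r is chosen so that P[B] = 1−α. Then for any measurable set Z with P[Z] = 1−α, ∫_B Σ_j 1_{Z_j(θ,π)}(x) log(π_j φ(x;θ_j)) dP(x) ≥ ∫_Z Σ_j 1_{Z_j(θ,π)}(x) log(π_j φ(x;θ_j)) dP(x); i.e., among all regions of P-mass 1−α, the set B keeping the observations with largest maximum weighted density maximizes the classification log-likelihood for fixed (θ,π). -/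

import Mathlib

open MeasureTheory Matrix

/-- The `p`-variate Gaussian density with mean `m` and covariance matrix `S`. -/
noncomputable def gpdf {p : ℕ} (m : Fin p → ℝ) (S : Matrix (Fin p) (Fin p) ℝ)
    (x : Fin p → ℝ) : ℝ :=
  (2 * Real.pi) ^ (-(p : ℝ) / 2) * S.det ^ (-(1 : ℝ) / 2) *
    Real.exp (-(1 / 2) * ((x - m) ⬝ᵥ (S⁻¹ *ᵥ (x - m))))

/-- The weighted maximum-likelihood assignment region `Z_j(θ,π)`, with ties assigned to the
smallest index, so that the `Z_j` partition `ℝᵖ`. -/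
noncomputable def Zpart {p k : ℕ} (w : Fin k → ℝ) (m : Fin k → Fin p → ℝ)
    (S : Fin k → Matrix (Fin p) (Fin p) ℝ) (j : Fin k) : Set (Fin p → ℝ) :=
  {x | (∀ r, w r * gpdf (m r) (S r) x ≤ w j * gpdf (m j) (S j) x) ∧
    ∀ r < j, ¬ ∀ s, w s * gpdf (m s) (S s) x ≤ w r * gpdf (m r) (S r) x}

/-- The denominator `∑ⱼ πⱼ ∫_{Z_j(θ,π)} φ(x;θⱼ) dx` of the normalizing constant. -/
noncomputable def etaDen {p k : ℕ} (w : Fin k → ℝ) (m : Fin k → Fin p → ℝ)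
    (S : Fin k → Matrix (Fin p) (Fin p) ℝ) : ℝ :=
  ∑ j, w j * ∫ x in Zpart w m S j, gpdf (m j) (S j) x

/-- The normalizing constant `η(θ,π)`. -/
noncomputable def eta {p k : ℕ} (w : Fin k → ℝ) (m : Fin k → Fin p → ℝ)
    (S : Fin k → Matrix (Fin p) (Fin p) ℝ) : ℝ :=
  1 / etaDen w m S

/-- The truncated-Gaussian clustering density
`f₀(x) = η(θ,π) ∑ⱼ 1_{Z_j(θ,π)}(x) πⱼ φ(x;θⱼ)`. -/
noncomputable def clusterDensity {p k : ℕ} (w : Fin k → ℝ) (m : Fin k → Fin p → ℝ)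
    (S : Fin k → Matrix (Fin p) (Fin p) ℝ) (x : Fin p → ℝ) : ℝ :=
  eta w m S * ∑ j, Set.indicator (Zpart w m S j) (fun y => w j * gpdf (m j) (S j) y) x

section aux
variable {p k : ℕ} {w : Fin k → ℝ} {m : Fin k → Fin p → ℝ} {S : Fin k → Matrix (Fin p) (Fin p) ℝ}

lemma gpdf_continuous (m : Fin p → ℝ) (S : Matrix (Fin p) (Fin p) ℝ) :
    Continuous (gpdf m S) := by
  unfold gpdf
  simp only [dotProduct, mulVec, Pi.sub_apply]
  fun_prop

lemma f_measurable (j : Fin k) :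
    Measurable (fun x => w j * gpdf (m j) (S j) x) :=
  (measurable_const.mul (gpdf_continuous (m j) (S j)).measurable)

lemma zpart_measurable (j : Fin k) : MeasurableSet (Zpart w m S j) := by
  have h : Zpart w m S j =
      (⋂ r, {x | w r * gpdf (m r) (S r) x ≤ w j * gpdf (m j) (S j) x}) ∩
      (⋂ r, ⋂ _ : r < j, (⋂ s, {x | w s * gpdf (m s) (S s) x ≤ w r * gpdf (m r) (S r) x})ᶜ) := by
    ext x; simp [Zpart, Set.mem_iInter]
  rw [h]
  apply MeasurableSet.inter
  · exact MeasurableSet.iInter fun r => measurableSet_le (f_measurable r) (f_measurable j)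
  · exact MeasurableSet.iInter fun r => MeasurableSet.iInter fun _ =>
      (MeasurableSet.iInter fun s => measurableSet_le (f_measurable s) (f_measurable r)).compl

lemma zpart_disjoint : Pairwise (Function.onFun Disjoint (Zpart w m S)) := by
  intro i j hij
  rw [Function.onFun, Set.disjoint_left]
  intro x hxi hxj
  rcases lt_or_gt_of_ne hij with h | h
  · exact hxj.2 i h hxi.1
  · exact hxi.2 j h hxj.1

lemma zpart_cover (x : Fin p → ℝ) [Nonempty (Fin k)] : ∃ j, x ∈ Zpart w m S j := by
  classical
  set T : Finset (Fin k) := Finset.univ.filter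
    (fun j => ∀ s, w s * gpdf (m s) (S s) x ≤ w j * gpdf (m j) (S j) x) with hT
  obtain ⟨j0, hj0⟩ := Finite.exists_max (fun j => w j * gpdf (m j) (S j) x)
  have hTne : T.Nonempty := ⟨j0, by simp [hT]; exact fun s => hj0 s⟩
  refine ⟨T.min' hTne, ?_, ?_⟩
  · have := T.min'_mem hTne
    simp [hT] at this
    exact this
  · intro r hr hall
    have : r ∈ T := by simp [hT]; exact hall
    exact absurd (T.min'_le r this) (not_le.mpr hr)

lemma zpart_sup [Nonempty (Fin k)] {j : Fin k} {x : Fin p → ℝ} (hx : x ∈ Zpart w m S j) :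
    w j * gpdf (m j) (S j) x = ⨆ s, w s * gpdf (m s) (S s) x := by
  apply le_antisymm
  · exact le_ciSup (f := fun s => w s * gpdf (m s) (S s) x) (Set.Finite.bddAbove (Set.finite_range _)) j
  · exact ciSup_le hx.1
end aux

/-- Optimality of likelihood-threshold trimming for fixed parameters: among all regions of
`P`-mass `1−α`, the superlevel set `B = {x : g(x) ≥ r}` of the maximal weighted density
`g(x) = maxⱼ πⱼ φ(x;θⱼ)` maximizes the classification log-likelihood. -/
theorem threshold_trimming_optimal {p k : ℕ} (P : Measure (Fin p → ℝ))
    [IsProbabilityMeasure P] (hac : P ≪ volume) (α : ℝ) (hα : 0 ≤ α) (hα1 : α < 1)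
    (w : Fin k → ℝ) (m : Fin k → Fin p → ℝ) (S : Fin k → Matrix (Fin p) (Fin p) ℝ)
    (hw : ∀ j, 0 ≤ w j) (hw1 : (∑ j, w j) = 1) (hwpos : ∃ j, 0 < w j)
    (hS : ∀ j, (S j).PosDef)
    (r : ℝ) (B : Set (Fin p → ℝ))
    (hBdef : B = {x | r ≤ ⨆ j, w j * gpdf (m j) (S j) x})
    (hBα : P B = ENNReal.ofReal (1 - α))
    (hint : Integrable (fun x => Real.log (⨆ j, w j * gpdf (m j) (S j) x)) P)
    (Z : Set (Fin p → ℝ)) (hZ : MeasurableSet Z) (hZα : P Z = ENNReal.ofReal (1 - α)) :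
    (∑ j, ∫ x in Zpart w m S j ∩ Z, Real.log (w j * gpdf (m j) (S j) x) ∂P) ≤
      ∑ j, ∫ x in Zpart w m S j ∩ B, Real.log (w j * gpdf (m j) (S j) x) ∂P := by
  classical
  obtain ⟨j0, hj0⟩ := hwpos
  haveI : Nonempty (Fin k) := ⟨j0⟩
  set g : (Fin p → ℝ) → ℝ := fun x => ⨆ s, w s * gpdf (m s) (S s) x with hg
  have hgm : Measurable g := Measurable.iSup fun j => f_measurable j
  have hgpos : ∀ x, 0 < g x := by
    intro x
    have h1 : (0:ℝ) < w j0 * gpdf (m j0) (S j0) x := by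
      have : 0 < gpdf (m j0) (S j0) x := by
        have hd : (0:ℝ) < (S j0).det := (hS j0).det_pos
        unfold gpdf; positivity
      exact mul_pos hj0 this
    exact lt_of_lt_of_le h1
      (le_ciSup (f := fun s => w s * gpdf (m s) (S s) x) (Set.Finite.bddAbove (Set.finite_range _)) j0)
  have hBmeas : MeasurableSet B := by
    rw [hBdef]
    exact measurableSet_le measurable_const hgm
  set L : (Fin p → ℝ) → ℝ := fun x => Real.log (g x) with hL
  have hLint : Integrable L P := hint
  -- Step 1: rewrite both sums as integrals of L
  have key : ∀ A : Set (Fin p → ℝ), MeasurableSet A →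
      (∑ j, ∫ x in Zpart w m S j ∩ A, Real.log (w j * gpdf (m j) (S j) x) ∂P)
        = ∫ x in A, L x ∂P := by
    intro A hA
    have h1 : ∀ j, ∫ x in Zpart w m S j ∩ A, Real.log (w j * gpdf (m j) (S j) x) ∂P
        = ∫ x in Zpart w m S j ∩ A, L x ∂P := by
      intro j
      apply setIntegral_congr_fun ((zpart_measurable j).inter hA)
      intro x hx
      simp only [hL, hg]
      rw [zpart_sup hx.1]
    have hcover : (⋃ j, Zpart w m S j ∩ A) = A := by
      rw [← Set.iUnion_inter]
      have : (⋃ j, Zpart w m S j) = Set.univ := by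
        ext x; simp only [Set.mem_iUnion, Set.mem_univ, iff_true]
        exact zpart_cover x
      rw [this, Set.univ_inter]
    calc (∑ j, ∫ x in Zpart w m S j ∩ A, Real.log (w j * gpdf (m j) (S j) x) ∂P)
        = ∑ j, ∫ x in Zpart w m S j ∩ A, L x ∂P := by simp_rw [h1]
      _ = ∫ x in ⋃ j, Zpart w m S j ∩ A, L x ∂P := by
          rw [integral_iUnion_fintype (fun j => (zpart_measurable j).inter hA)
            (fun i j hij => (zpart_disjoint hij).mono Set.inter_subset_left Set.inter_subset_left)
            (fun j => hLint.integrableOn)]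
      _ = ∫ x in A, L x ∂P := by rw [hcover]
  rw [key Z hZ, key B hBmeas]
  -- Step 2: P (B \ Z) = P (Z \ B)
  have hfin : P (B ∩ Z) ≠ ⊤ := (measure_lt_top P _).ne
  have hBZ : P (B \ Z) = P (Z \ B) := by
    have h1 := measure_inter_add_diff (μ := P) B hZ
    have h2 := measure_inter_add_diff (μ := P) Z hBmeas
    rw [Set.inter_comm Z B] at h2
    have h3 : P (B ∩ Z) + P (B \ Z) = P (B ∩ Z) + P (Z \ B) := by
      rw [h1, h2, hBα, hZα]
    exact (ENNReal.add_right_inj hfin).mp h3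
  -- Step 3: split both integrals
  have hintOn : ∀ A : Set (Fin p → ℝ), IntegrableOn L A P := fun A => hLint.integrableOn
  have hsplitZ : ∫ x in Z, L x ∂P = (∫ x in Z ∩ B, L x ∂P) + ∫ x in Z \ B, L x ∂P := by
    rw [← setIntegral_union ((disjoint_sdiff_self_right).mono_left Set.inter_subset_right)
      (hZ.diff hBmeas) (hintOn _) (hintOn _), Set.inter_union_diff]
  have hsplitB : ∫ x in B, L x ∂P = (∫ x in Z ∩ B, L x ∂P) + ∫ x in B \ Z, L x ∂P := by
    rw [← setIntegral_union ((disjoint_sdiff_self_right).mono_left Set.inter_subset_left)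
      (hBmeas.diff hZ) (hintOn _) (hintOn _)]
    rw [Set.inter_comm Z B, Set.inter_union_diff]
  rw [hsplitZ, hsplitB]
  apply add_le_add_right
  -- Step 4: ∫_{Z\B} L ≤ ∫_{B\Z} L
  by_cases hr : 0 < r
  · calc ∫ x in Z \ B, L x ∂P ≤ ∫ x in Z \ B, Real.log r ∂P := by
          apply setIntegral_mono_on (hintOn _) (integrableOn_const (measure_lt_top _ _).ne)
            (hZ.diff hBmeas)
          intro x hx
          have hxB : ¬ r ≤ g x := by
            have := hx.2
            rw [hBdef] at this
            exact this
          exact Real.log_le_log (hgpos x) (not_le.mp hxB).le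
      _ = (P (Z \ B)).toReal • Real.log r := setIntegral_const _
      _ = (P (B \ Z)).toReal • Real.log r := by rw [hBZ]
      _ = ∫ x in B \ Z, Real.log r ∂P := (setIntegral_const _).symm
      _ ≤ ∫ x in B \ Z, L x ∂P := by
          apply setIntegral_mono_on (integrableOn_const (measure_lt_top _ _).ne)
            (hintOn _) (hBmeas.diff hZ)
          intro x hx
          have hxB : r ≤ g x := by
            have := hx.1
            rw [hBdef] at this
            exact this
          exact Real.log_le_log hr hxB
  · have hBuniv : B = Set.univ := by
      rw [hBdef]
      ext x
      simp only [Set.mem_setOf_eq, Set.mem_univ, iff_true]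
      exact le_trans (not_lt.mp hr) (hgpos x).le
    have hZB0 : P (Z \ B) = 0 := by rw [hBuniv]; simp
    have hBZ0 : P (B \ Z) = 0 := hBZ.trans hZB0
    rw [Measure.restrict_eq_zero.mpr hZB0, Measure.restrict_eq_zero.mpr hBZ0]
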